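/- For every positive integer h there exist constants γ₁ = γ₁(h) > 0 and γ₂ = γ₂(h) > 0, depending only on h, with the following property: for every positive integer n, every set A = {V^(1), …, V^(k)} ⊆ {−1/√n, 1/√n}^n with k ≤ h, and every V ∈ {−1/√n, 1/√n}^n, there exist real numbers β₁, …, β_k with |β_i| ≤ γ₁ for all i such that the vector U = β₁V^(1) + ⋯ + β_kV^(k) satisfies ‖V − U‖₂ ≤ γ₂ · dist_{ℓ₂}(V, span(A)). -/

import Mathlib

open Metric

/-- The scaled hypercube {−1/√n, 1/√n}^n as a subset of Euclidean space. -/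
def scaledCube (n : ℕ) : Set (EuclideanSpace ℝ (Fin n)) :=
  {X | ∀ i, X i = 1 / Real.sqrt n ∨ X i = -(1 / Real.sqrt n)}

namespace Stmt14Aux

open Finset

/-- sign value of a boolean, as a real. -/
def sgn (b : Bool) : ℝ := if b then 1 else -1

lemma sgn_cases (b : Bool) : sgn b = 1 ∨ sgn b = -1 := by
  cases b <;> simp [sgn]

/-- value of the linear functional α at the cube vertex b. -/
def tval {d : ℕ} (α : Fin d → ℝ) (b : Fin d → Bool) : ℝ := ∑ j, α j * sgn (b j)

/-- the region profile of α : for every vertex, records whether the value is >1, < -1,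
or in [-1,1]. -/
noncomputable def prof {d : ℕ} (α : Fin d → ℝ) : (Fin d → Bool) → Fin 3 := fun b =>
  if 1 < tval α b then 2 else if tval α b < -1 then 0 else 1

/-- the margin of α : how far the values outside [-1,1] are from ±1. -/
noncomputable def marg {d : ℕ} (α : Fin d → ℝ) : ℝ :=
  Finset.univ.inf' (univ_nonempty) (fun b => if prof α b = 1 then 1 else |tval α b| - 1)

lemma marg_pos {d : ℕ} (α : Fin d → ℝ) : 0 < marg α := by
  rw [marg, Finset.lt_inf'_iff]
  intro b _
  by_cases h : prof α b = 1
  · simp [h]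
  · simp only [h, if_false]
    rw [prof] at h
    split_ifs at h with h1 h2
    · have : |tval α b| = tval α b := abs_of_pos (by linarith)
      linarith
    · have : |tval α b| = -(tval α b) := abs_of_neg (by linarith)
      linarith
    · exact absurd rfl h

lemma marg_le {d : ℕ} (α : Fin d → ℝ) (b : Fin d → Bool) (h : prof α b ≠ 1) :
    marg α ≤ |tval α b| - 1 := by
  have h2 := Finset.inf'_le (fun b => if prof α b = 1 then (1:ℝ) else |tval α b| - 1)
    (Finset.mem_univ b)
  rw [marg]
  exact le_trans h2 (by simp [h])

/-- a representative with the given profile (or 0 if none). -/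
noncomputable def rep {d : ℕ} (p : (Fin d → Bool) → Fin 3) : Fin d → ℝ := by
  classical exact if h : ∃ α : Fin d → ℝ, prof α = p then h.choose else 0

/-- the uniform margin in dimension d. -/
noncomputable def del (d : ℕ) : ℝ :=
  Finset.univ.inf' (univ_nonempty) (fun p : (Fin d → Bool) → Fin 3 => marg (rep p))

lemma del_pos (d : ℕ) : 0 < del d := by
  rw [del, Finset.lt_inf'_iff]
  intro p _
  exact marg_pos _

lemma del_le {d : ℕ} (p : (Fin d → Bool) → Fin 3) : del d ≤ marg (rep p) :=
  Finset.inf'_le _ (Finset.mem_univ p)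

/-- The three-region certificate lemma. -/
lemma exists_cert {d : ℕ} (α : Fin d → ℝ) :
    ∃ g : Fin d → ℝ,
      (∀ b, 1 < tval α b → 1 + del d ≤ tval g b) ∧
      (∀ b, tval α b < -1 → tval g b ≤ -(1 + del d)) ∧
      (∀ b, -1 ≤ tval α b → tval α b ≤ 1 → |tval g b| ≤ 1) := by
  classical
  have hex : ∃ β : Fin d → ℝ, prof β = prof α := ⟨α, rfl⟩
  set g := rep (prof α) with hg
  have hrep : prof g = prof α := by
    rw [hg, rep]
    rw [dif_pos hex]
    exact hex.choose_spec
  have hδ : del d ≤ marg g := del_le _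
  refine ⟨g, ?_, ?_, ?_⟩ <;> intro b
  · intro h
    have hp : prof α b = 2 := by
      rw [prof]; simp only [h, if_true]
    have hp2 : prof g b = 2 := by rw [hrep, hp]
    have hgt : 1 < tval g b := by
      by_contra hc
      rw [prof] at hp2
      rw [if_neg hc] at hp2
      split_ifs at hp2 <;> exact absurd hp2 (by decide)
    have hm : marg g ≤ |tval g b| - 1 :=
      marg_le _ _ (by rw [hp2]; decide)
    have habs : |tval g b| = tval g b := abs_of_pos (by linarith)
    rw [habs] at hm
    linarith
  · intro h
    have hp : prof α b = 0 := by
      rw [prof]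
      have h' : ¬ (1 < tval α b) := by linarith
      rw [if_neg h', if_pos h]
    have hp2 : prof g b = 0 := by rw [hrep, hp]
    have hlt : tval g b < -1 := by
      by_contra hc
      rw [prof] at hp2
      by_cases h1 : 1 < tval g b
      · rw [if_pos h1] at hp2; exact absurd hp2 (by decide)
      · rw [if_neg h1, if_neg hc] at hp2; exact absurd hp2 (by decide)
    have hm : marg g ≤ |tval g b| - 1 :=
      marg_le _ _ (by rw [hp2]; decide)
    have habs : |tval g b| = -(tval g b) := abs_of_neg (by linarith)
    rw [habs] at hm
    linarith
  · intro h1 h2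
    have hp : prof α b = 1 := by
      rw [prof]
      have ha : ¬ (1 < tval α b) := by linarith
      have hb : ¬ (tval α b < -1) := by linarith
      rw [if_neg ha, if_neg hb]
    have hp2 : prof g b = 1 := by rw [hrep, hp]
    rw [prof] at hp2
    by_cases hh1 : 1 < tval g b
    · rw [if_pos hh1] at hp2; exact absurd hp2 (by decide)
    · by_cases hh2 : tval g b < -1
      · rw [if_neg hh1, if_pos hh2] at hp2; exact absurd hp2 (by decide)
      · push_neg at hh1 hh2
        rw [abs_le]; constructor <;> linarith


/-- The core ℓ¹ vs ℓ² inequality for residuals of sign vectors. -/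
lemma core {d n : ℕ} (α : Fin d → ℝ) (ε : Fin n → ℝ) (hε : ∀ i, ε i = 1 ∨ ε i = -1)
    (κ : Fin n → Fin d → ℝ) (hκ : ∀ i j, κ i j = 1 ∨ κ i j = -1)
    (x : Fin n → ℝ) (hx : ∀ i, x i = ε i - ∑ j, α j * κ i j)
    (horth : ∀ j, ∑ i, x i * κ i j = 0) :
    ∑ i, |x i| ≤ (1 + 2 / del d) * ∑ i, (x i)^2 := by
  classical
  obtain ⟨g, hg1, hg2, hg3⟩ := exists_cert α
  have hδ : 0 < del d := del_pos d
  set Λ : ℝ := 1 / del d with hΛ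
  have hΛpos : 0 < Λ := by positivity
  have hΛδ : Λ * del d = 1 := by rw [hΛ]; field_simp
  set b : Fin n → (Fin d → Bool) := fun i j => decide (κ i j = 1) with hb
  have hsgn : ∀ i j, sgn (b i j) = κ i j := by
    intro i j
    rcases hκ i j with h | h
    · have hbt : b i j = true := by rw [hb]; simp only [h, decide_eq_true_eq]
      rw [hbt, h]; rfl
    · have hne : ¬ (κ i j = 1) := by rw [h]; norm_num
      have hbt : b i j = false := by rw [hb]; simp only [decide_eq_false_iff_not]; exact hne
      rw [hbt, h]; rfl
  have htv : ∀ i, tval α (b i) = ∑ j, α j * κ i j := by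
    intro i
    rw [tval]
    exact Finset.sum_congr rfl fun j _ => by rw [hsgn]
  have htvg : ∀ i, tval g (b i) = ∑ j, g j * κ i j := by
    intro i
    rw [tval]
    exact Finset.sum_congr rfl fun j _ => by rw [hsgn]
  -- pointwise inequality
  have hpoint : ∀ i, |x i| ≤ x i * ε i + 2 * (x i * (Λ * ε i - Λ * tval g (b i))) := by
    intro i
    set ta := tval α (b i) with hta
    set tg := tval g (b i) with htg
    have hxi : x i = ε i - ta := by rw [hx i, hta, htv i]
    rcases lt_trichotomy 1 ta with hreg | hreg | hreg
    · -- ta > 1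
      have hcert : 1 + del d ≤ tg := hg1 (b i) hreg
      have hvge : Λ + 1 ≤ Λ * tg := by nlinarith
      rcases hε i with he | he
      · have hxneg : x i < 0 := by rw [hxi, he]; linarith
        rw [abs_of_neg hxneg, he]
        nlinarith [mul_nonneg (by linarith : (0:ℝ) ≤ -x i)
          (by linarith : (0:ℝ) ≤ Λ * tg - Λ - 1)]
      · have hxneg : x i < 0 := by rw [hxi, he]; linarith
        rw [abs_of_neg hxneg, he]
        nlinarith [mul_nonneg (by linarith : (0:ℝ) ≤ -x i)
          (by linarith : (0:ℝ) ≤ Λ * tg + Λ)]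
    · -- ta = 1
      have hcert : |tg| ≤ 1 := hg3 (b i) (by rw [← hta, ← hreg]; norm_num)
        (by rw [← hta, ← hreg])
      have hv1 := abs_le.mp hcert
      rcases hε i with he | he
      · have hx0 : x i = 0 := by rw [hxi, he, ← hreg]; ring
        simp [hx0]
      · have hxneg : x i ≤ 0 := by rw [hxi, he]; linarith
        rw [abs_of_nonpos hxneg, he]
        nlinarith [mul_nonneg (mul_nonneg hΛpos.le (by linarith : (0:ℝ) ≤ -x i))
          (by linarith : (0:ℝ) ≤ 1 + tg)]
    · -- ta < 1
      rcases lt_trichotomy ta (-1) with hreg2 | hreg2 | hreg2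
      · -- ta < -1
        have hcert : tg ≤ -(1 + del d) := hg2 (b i) hreg2
        have hvle : Λ * tg ≤ -(Λ + 1) := by nlinarith
        rcases hε i with he | he
        · have hxpos : 0 < x i := by rw [hxi, he]; linarith
          rw [abs_of_pos hxpos, he]
          nlinarith [mul_nonneg hxpos.le (by linarith : (0:ℝ) ≤ Λ - Λ * tg)]
        · have hxpos : 0 < x i := by rw [hxi, he]; linarith
          rw [abs_of_pos hxpos, he]
          nlinarith [mul_nonneg hxpos.le (by linarith : (0:ℝ) ≤ -(Λ + 1) - Λ * tg)]
      · -- ta = -1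
        have hcert : |tg| ≤ 1 := hg3 (b i) (by rw [← hta, hreg2])
          (by rw [← hta, hreg2]; norm_num)
        have hv1 := abs_le.mp hcert
        rcases hε i with he | he
        · have hxpos : 0 ≤ x i := by rw [hxi, he]; linarith
          rw [abs_of_nonneg hxpos, he]
          nlinarith [mul_nonneg (mul_nonneg hΛpos.le hxpos)
            (by linarith : (0:ℝ) ≤ 1 - tg)]
        · have hx0 : x i = 0 := by rw [hxi, he, hreg2]; ring
          simp [hx0]
      · -- -1 < ta < 1
        have hcert : |tg| ≤ 1 := hg3 (b i) (by rw [← hta]; linarith)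
          (by rw [← hta]; linarith)
        have hv1 := abs_le.mp hcert
        rcases hε i with he | he
        · have hxpos : 0 ≤ x i := by rw [hxi, he]; linarith
          rw [abs_of_nonneg hxpos, he]
          nlinarith [mul_nonneg (mul_nonneg hΛpos.le hxpos)
            (by linarith : (0:ℝ) ≤ 1 - tg)]
        · have hxneg : x i ≤ 0 := by rw [hxi, he]; linarith
          rw [abs_of_nonpos hxneg, he]
          nlinarith [mul_nonneg (mul_nonneg hΛpos.le (by linarith : (0:ℝ) ≤ -x i))
            (by linarith : (0:ℝ) ≤ 1 + tg)]
  -- sum of x i * (Λ * tval g (b i)) vanishes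
  have hsumv : ∑ i, x i * (Λ * tval g (b i)) = 0 := by
    calc ∑ i, x i * (Λ * tval g (b i))
        = ∑ i, ∑ j, Λ * g j * (x i * κ i j) := by
          refine Finset.sum_congr rfl fun i _ => ?_
          rw [htvg i, Finset.mul_sum, Finset.mul_sum]
          exact Finset.sum_congr rfl fun j _ => by ring
      _ = ∑ j, ∑ i, Λ * g j * (x i * κ i j) := Finset.sum_comm
      _ = ∑ j : Fin d, Λ * g j * ∑ i, x i * κ i j := by
          refine Finset.sum_congr rfl fun j _ => ?_
          rw [Finset.mul_sum]
      _ = 0 := by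
          refine Finset.sum_eq_zero fun j _ => ?_
          rw [horth j, mul_zero]
  -- sum x ε equals sum x²
  have hsume : ∑ i, x i * ε i = ∑ i, (x i)^2 := by
    have key : ∑ i, (x i * ε i - (x i)^2) = 0 := by
      calc ∑ i, (x i * ε i - (x i)^2)
          = ∑ i, ∑ j, α j * (x i * κ i j) := by
            refine Finset.sum_congr rfl fun i _ => ?_
            have h1 : x i * ε i - (x i)^2 = x i * (ε i - x i) := by ring
            have h2 : ε i - x i = ∑ j, α j * κ i j := by rw [hx i]; ring
            rw [h1, h2, Finset.mul_sum]
            exact Finset.sum_congr rfl fun j _ => by ring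
        _ = ∑ j, ∑ i, α j * (x i * κ i j) := Finset.sum_comm
        _ = 0 := by
            refine Finset.sum_eq_zero fun j _ => ?_
            rw [← Finset.mul_sum, horth j, mul_zero]
    have expand : ∑ i, (x i * ε i - (x i)^2) = ∑ i, x i * ε i - ∑ i, (x i)^2 :=
      Finset.sum_sub_distrib _ _
    rw [expand] at key
    linarith
  -- combine
  calc ∑ i, |x i| ≤ ∑ i, (x i * ε i + 2 * (x i * (Λ * ε i - Λ * tval g (b i)))) :=
        Finset.sum_le_sum fun i _ => hpoint i
    _ = (1 + 2 * Λ) * (∑ i, x i * ε i) - 2 * ∑ i, x i * (Λ * tval g (b i)) := by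
        rw [Finset.mul_sum, Finset.mul_sum, ← Finset.sum_sub_distrib]
        exact Finset.sum_congr rfl fun i _ => by ring
    _ = (1 + 2 / del d) * ∑ i, (x i)^2 := by rw [hsumv, hsume, hΛ]; ring


open scoped RealInnerProductSpace

/-- Real inner product on Euclidean space as a sum of coordinates. -/
lemma inner_coord {n : ℕ} (a c : EuclideanSpace ℝ (Fin n)) : ⟪a, c⟫ = ∑ i, a i * c i := by
  rw [PiLp.inner_apply]
  exact Finset.sum_congr rfl fun i _ => by
    simp [RCLike.inner_apply, mul_comm]

/-- The key correlation bound: any hypercube vector has inner product with a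
residual vector z bounded by a constant times ‖z‖². -/
lemma key_corr {n d : ℕ} (hn : 0 < n) (v : Fin d → EuclideanSpace ℝ (Fin n))
    (hv : ∀ j, v j ∈ scaledCube n) (vm : EuclideanSpace ℝ (Fin n)) (hvm : vm ∈ scaledCube n)
    (w : EuclideanSpace ℝ (Fin n)) (hw : w ∈ scaledCube n) (α : Fin d → ℝ)
    (z : EuclideanSpace ℝ (Fin n)) (hz : ∀ i, z i = vm i - ∑ j, α j * (v j) i)
    (horth : ∀ j, ⟪z, v j⟫ = 0) :
    |⟪w, z⟫| ≤ (1 + 2 / del d) * ‖z‖^2 := by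
  classical
  set s : ℝ := Real.sqrt n with hsdef
  have hs : 0 < s := Real.sqrt_pos.mpr (by exact_mod_cast hn)
  have hC : 0 < 1 + 2 / del d := by have := del_pos d; positivity
  set ε : Fin n → ℝ := fun i => s * vm i with hε
  set κ : Fin n → Fin d → ℝ := fun i j => s * (v j) i with hκdef
  set x : Fin n → ℝ := fun i => s * z i with hxdef
  have cube_pm : ∀ (u : EuclideanSpace ℝ (Fin n)), u ∈ scaledCube n →
      ∀ i, s * u i = 1 ∨ s * u i = -1 := by
    intro u hu i
    rcases hu i with h | h
    · left; rw [h, hsdef]; field_simp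
    · right; rw [h, hsdef]; field_simp
  have hεpm : ∀ i, ε i = 1 ∨ ε i = -1 := fun i => cube_pm vm hvm i
  have hκpm : ∀ i j, κ i j = 1 ∨ κ i j = -1 := fun i j => cube_pm (v j) (hv j) i
  have hxeq : ∀ i, x i = ε i - ∑ j, α j * κ i j := by
    intro i
    rw [hxdef, hε, hκdef]
    simp only
    rw [hz i, mul_sub, Finset.mul_sum]
    congr 1
    exact Finset.sum_congr rfl fun j _ => by ring
  have horth' : ∀ j, ∑ i, x i * κ i j = 0 := by
    intro j
    have h1 : ∑ i, x i * κ i j = s^2 * ∑ i, z i * (v j) i := by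
      rw [Finset.mul_sum]
      exact Finset.sum_congr rfl fun i _ => by rw [hxdef, hκdef]; ring
    rw [h1, ← inner_coord, horth j, mul_zero]
  have hcore := core α ε hεpm κ hκpm x hxeq horth'
  -- translate back
  have hnormz : ∑ i, (x i)^2 = s^2 * ‖z‖^2 := by
    rw [← real_inner_self_eq_norm_sq, inner_coord, Finset.mul_sum]
    exact Finset.sum_congr rfl fun i _ => by rw [hxdef]; ring
  have hwabs : ∀ i, |w i| = 1/s := by
    intro i
    rcases hw i with h | h
    · rw [h, hsdef]; exact abs_of_pos (by positivity)
    · rw [h, hsdef, abs_neg]; exact abs_of_pos (by positivity)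
  have hstep : |⟪w, z⟫| ≤ (1/s^2) * ∑ i, |x i| := by
    rw [inner_coord]
    calc |∑ i, w i * z i| ≤ ∑ i, |w i * z i| := Finset.abs_sum_le_sum_abs _ _
      _ = (1/s^2) * ∑ i, |x i| := by
          rw [Finset.mul_sum]
          refine Finset.sum_congr rfl fun i _ => ?_
          rw [abs_mul, hwabs i, hxdef]
          simp only
          rw [abs_mul, abs_of_pos hs]
          field_simp
  calc |⟪w, z⟫| ≤ (1/s^2) * ∑ i, |x i| := hstep
    _ ≤ (1/s^2) * ((1 + 2 / del d) * ∑ i, (x i)^2) := by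
        apply mul_le_mul_of_nonneg_left hcore (by positivity)
    _ = (1 + 2 / del d) * ‖z‖^2 := by
        rw [hnormz]
        field_simp

/-! ### Gram–Schmidt with explicit coefficients -/

variable {n : ℕ}

noncomputable def cm (Y : ℕ → EuclideanSpace ℝ (Fin n)) : ℕ → ℕ → ℝ
  | j, i =>
    (if i = j then 1 else 0) -
      ∑ l ∈ (Finset.range j).attach,
        (⟪Y j, ∑ i' ∈ Finset.range (l.1+1), cm Y l.1 i' • Y i'⟫ /
          ‖∑ i' ∈ Finset.range (l.1+1), cm Y l.1 i' • Y i'‖^2) * cm Y l.1 i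
termination_by j i => j
decreasing_by all_goals exact Finset.mem_range.mp l.2

/-- the Gram-Schmidt residual vectors. -/
noncomputable def zv (Y : ℕ → EuclideanSpace ℝ (Fin n)) (l : ℕ) : EuclideanSpace ℝ (Fin n) :=
  ∑ i ∈ Finset.range (l+1), cm Y l i • Y i

/-- the Gram-Schmidt projection coefficients. -/
noncomputable def th (Y : ℕ → EuclideanSpace ℝ (Fin n)) (j l : ℕ) : ℝ :=
  ⟪Y j, zv Y l⟫ / ‖zv Y l‖^2

lemma cm_eq (Y : ℕ → EuclideanSpace ℝ (Fin n)) (j i : ℕ) :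
    cm Y j i = (if i = j then 1 else 0) - ∑ l ∈ Finset.range j, th Y j l * cm Y l i := by
  rw [cm]
  congr 1
  rw [← Finset.sum_attach (Finset.range j) (fun l => th Y j l * cm Y l i)]
  rfl

lemma cm_gt (Y : ℕ → EuclideanSpace ℝ (Fin n)) :
    ∀ j i : ℕ, j < i → cm Y j i = 0 := by
  intro j
  induction j using Nat.strong_induction_on with
  | _ j ih =>
    intro i hji
    rw [cm_eq]
    have h1 : ¬ (i = j) := by omega
    rw [if_neg h1, Finset.sum_eq_zero, sub_zero]
    intro l hl
    have hlj := Finset.mem_range.mp hl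
    rw [ih l hlj i (by omega), mul_zero]

lemma cm_diag (Y : ℕ → EuclideanSpace ℝ (Fin n)) (j : ℕ) : cm Y j j = 1 := by
  rw [cm_eq, if_pos rfl, Finset.sum_eq_zero, sub_zero]
  intro l hl
  rw [cm_gt Y l j (Finset.mem_range.mp hl), mul_zero]

lemma zv_eq (Y : ℕ → EuclideanSpace ℝ (Fin n)) (j : ℕ) :
    zv Y j = Y j - ∑ l ∈ Finset.range j, th Y j l • zv Y l := by
  have hstep : ∀ i ∈ Finset.range (j+1), cm Y j i • Y i =
      (if i = j then (1:ℝ) else 0) • Y i - ∑ l ∈ Finset.range j, (th Y j l * cm Y l i) • Y i := by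
    intro i _
    rw [cm_eq Y j i, sub_smul, Finset.sum_smul]
  rw [zv, Finset.sum_congr rfl hstep, Finset.sum_sub_distrib]
  congr 1
  · rw [Finset.sum_eq_single j]
    · rw [if_pos rfl, one_smul]
    · intro i _ hne
      rw [if_neg hne, zero_smul]
    · intro habs
      exact absurd (Finset.self_mem_range_succ j) habs
  · rw [Finset.sum_comm]
    refine Finset.sum_congr rfl fun l hl => ?_
    have hlj : l < j := Finset.mem_range.mp hl
    rw [zv, Finset.smul_sum]
    rw [Finset.sum_subset (by intro m hm; rw [Finset.mem_range] at *; omega :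
      Finset.range (l+1) ⊆ Finset.range (j+1))]
    · exact Finset.sum_congr rfl fun i _ => by rw [smul_smul]
    · intro i _ hnotin
      rw [Finset.mem_range, not_lt] at hnotin
      rw [cm_gt Y l i (by omega), zero_smul, smul_zero]

lemma th_zero_of_zv_zero (Y : ℕ → EuclideanSpace ℝ (Fin n)) (j l : ℕ) (h : zv Y l = 0) :
    th Y j l = 0 := by
  rw [th, h]
  simp

lemma th_mul (Y : ℕ → EuclideanSpace ℝ (Fin n)) (j l : ℕ) :
    th Y j l * ‖zv Y l‖^2 = ⟪Y j, zv Y l⟫ := by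
  by_cases h : zv Y l = 0
  · rw [th_zero_of_zv_zero Y j l h, h]
    simp
  · rw [th, div_mul_cancel₀]
    exact pow_ne_zero 2 (norm_ne_zero_iff.mpr h)

lemma zv_orth (Y : ℕ → EuclideanSpace ℝ (Fin n)) :
    ∀ j l : ℕ, l < j → ⟪zv Y j, zv Y l⟫ = 0 := by
  intro j
  induction j using Nat.strong_induction_on with
  | _ j ih =>
    intro l hlj
    rw [zv_eq Y j, inner_sub_left, sum_inner]
    have hsum : ∑ l' ∈ Finset.range j, ⟪th Y j l' • zv Y l', zv Y l⟫ = ⟪Y j, zv Y l⟫ := by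
      rw [Finset.sum_eq_single l]
      · rw [real_inner_smul_left, real_inner_self_eq_norm_sq, th_mul]
      · intro l' hl' hne
        rw [real_inner_smul_left]
        rcases lt_or_gt_of_ne hne with hc | hc
        · rw [real_inner_comm, ih l hlj l' hc, mul_zero]
        · rw [ih l' (Finset.mem_range.mp hl') l hc, mul_zero]
      · intro habs
        exact absurd (Finset.mem_range.mpr hlj) habs
    rw [hsum, sub_self]

lemma zv_orth_Y (Y : ℕ → EuclideanSpace ℝ (Fin n)) :
    ∀ j l : ℕ, l < j → ⟪zv Y j, Y l⟫ = 0 := by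
  intro j l hlj
  have hY : Y l = zv Y l + ∑ l' ∈ Finset.range l, th Y l l' • zv Y l' := by
    rw [zv_eq]
    abel
  rw [hY, inner_add_right, zv_orth Y j l hlj, inner_sum, zero_add]
  refine Finset.sum_eq_zero fun l' hl' => ?_
  rw [real_inner_smul_right, zv_orth Y j l' (lt_trans (Finset.mem_range.mp hl') hlj), mul_zero]

/-- coordinates of the residual vector. -/
lemma sum_smul_apply {ι : Type*} (s : Finset ι) (f : ι → ℝ)
    (g : ι → EuclideanSpace ℝ (Fin n)) (c : Fin n) :
    (∑ i ∈ s, f i • g i) c = ∑ i ∈ s, f i * g i c := by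
  classical
  induction s using Finset.cons_induction with
  | empty => simp
  | cons a s ha ih =>
    rw [Finset.sum_cons, Finset.sum_cons, ← ih]
    simp [PiLp.add_apply, PiLp.smul_apply]

/-! ### Uniform bounds -/

/-- the uniform correlation constant for at most h vectors. -/
noncomputable def Cb (h : ℕ) : ℝ := 1 + 2 * ∑ d ∈ Finset.range h, (1 / del d)

lemma Cb_pos (h : ℕ) : 0 < Cb h := by
  have hsum : 0 ≤ ∑ d ∈ Finset.range h, (1 / del d) :=
    Finset.sum_nonneg fun d _ => le_of_lt (by have := del_pos d; positivity)
  rw [Cb]; linarith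

lemma le_Cb {h d : ℕ} (hd : d < h) : 1 + 2 / del d ≤ Cb h := by
  have h1 : (1:ℝ) / del d ≤ ∑ e ∈ Finset.range h, (1 / del e) :=
    Finset.single_le_sum (f := fun e => (1:ℝ) / del e)
      (fun e _ => le_of_lt (by have := del_pos e; positivity))
      (Finset.mem_range.mpr hd)
  rw [Cb]
  have h2 : 2 / del d = 2 * (1 / del d) := by ring
  rw [h2]
  linarith

/-- correlation of any cube vector with a residual. -/
lemma corr_zv {n k h : ℕ} (hn : 0 < n) (hk : k ≤ h) (Y : ℕ → EuclideanSpace ℝ (Fin n))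
    (hYc : ∀ m, m < k → Y m ∈ scaledCube n) (w : EuclideanSpace ℝ (Fin n))
    (hw : w ∈ scaledCube n) (l : ℕ) (hl : l < k) :
    |⟪w, zv Y l⟫| ≤ Cb h * ‖zv Y l‖^2 := by
  have hkey := key_corr hn (fun i : Fin l => Y i)
    (fun i => hYc i (lt_trans i.isLt hl)) (Y l) (hYc l hl) w hw
    (fun i : Fin l => -(cm Y l i)) (zv Y l) ?_ ?_
  · calc |⟪w, zv Y l⟫| ≤ (1 + 2 / del l) * ‖zv Y l‖^2 := hkey
      _ ≤ Cb h * ‖zv Y l‖^2 :=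
        mul_le_mul_of_nonneg_right (le_Cb (lt_of_lt_of_le hl hk)) (sq_nonneg _)
  · intro c
    rw [zv, sum_smul_apply, Finset.sum_range_succ, cm_diag, one_mul]
    have : ∀ i : Fin l, (-(cm Y l i)) * (Y i) c = -(cm Y l i * (Y i) c) := fun i => by ring
    rw [Finset.sum_congr rfl fun i _ => this i, Finset.sum_neg_distrib]
    rw [Fin.sum_univ_eq_sum_range (fun i => cm Y l i * (Y i) c)]
    ring
  · intro j
    exact zv_orth_Y Y l j j.isLt

/-- bound for the division coefficient. -/
lemma coeff_bound {n k h : ℕ} (hn : 0 < n) (hk : k ≤ h) (Y : ℕ → EuclideanSpace ℝ (Fin n))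
    (hYc : ∀ m, m < k → Y m ∈ scaledCube n) (w : EuclideanSpace ℝ (Fin n))
    (hw : w ∈ scaledCube n) (l : ℕ) (hl : l < k) :
    |⟪w, zv Y l⟫ / ‖zv Y l‖^2| ≤ Cb h := by
  by_cases hz : zv Y l = 0
  · rw [hz]
    simp [le_of_lt (Cb_pos h)]
  · have hnz : (0:ℝ) < ‖zv Y l‖^2 := by
      have := norm_pos_iff.mpr hz
      positivity
    rw [abs_div, abs_of_pos hnz, div_le_iff₀ hnz]
    calc |⟪w, zv Y l⟫| ≤ Cb h * ‖zv Y l‖^2 := corr_zv hn hk Y hYc w hw l hl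
      _ = Cb h * ‖zv Y l‖^2 := rfl

/-- bound on the Gram-Schmidt coefficients. -/
lemma cm_bound {n k h : ℕ} (hn : 0 < n) (hk : k ≤ h) (Y : ℕ → EuclideanSpace ℝ (Fin n))
    (hYc : ∀ m, m < k → Y m ∈ scaledCube n) :
    ∀ j, j < k → ∀ i, |cm Y j i| ≤ (1 + Cb h)^j := by
  intro j
  induction j using Nat.strong_induction_on with
  | _ j ih =>
    intro hjk i
    rw [cm_eq]
    have hbd : ∀ l ∈ Finset.range j, |th Y j l * cm Y l i| ≤ Cb h * (1 + Cb h)^l := by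
      intro l hl
      have hlj := Finset.mem_range.mp hl
      rw [abs_mul]
      have h1 : |th Y j l| ≤ Cb h := by
        rw [th]
        exact coeff_bound hn hk Y hYc (Y j) (hYc j hjk) l (lt_trans hlj hjk)
      have h2 : |cm Y l i| ≤ (1 + Cb h)^l := ih l hlj (lt_trans hlj hjk) i
      exact mul_le_mul h1 h2 (abs_nonneg _) (le_trans (abs_nonneg _) h1)
    have hgeom : 1 + ∑ l ∈ Finset.range j, Cb h * (1 + Cb h)^l = (1 + Cb h)^j := by
      have hgs := geom_sum_mul (1 + Cb h) j
      have : ∑ l ∈ Finset.range j, Cb h * (1 + Cb h)^l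
          = (∑ l ∈ Finset.range j, (1 + Cb h)^l) * (1 + Cb h - 1) := by
        rw [Finset.sum_mul]
        exact Finset.sum_congr rfl fun l _ => by ring
      rw [this, hgs]
      ring
    calc |(if i = j then (1:ℝ) else 0) - ∑ l ∈ Finset.range j, th Y j l * cm Y l i|
        ≤ |if i = j then (1:ℝ) else 0| + |∑ l ∈ Finset.range j, th Y j l * cm Y l i| :=
          abs_sub _ _
      _ ≤ 1 + ∑ l ∈ Finset.range j, Cb h * (1 + Cb h)^l := by
          gcongr
          · split_ifs <;> simp
          · exact le_trans (Finset.abs_sum_le_sum_abs _ _) (Finset.sum_le_sum hbd)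
      _ = (1 + Cb h)^j := hgeom

end Stmt14Aux

open scoped RealInnerProductSpace
open Stmt14Aux

/-- Low-weight near-best approximation: for every h there are constants γ₁, γ₂ > 0 depending
only on h such that for every n, every family of k ≤ h hypercube points V^(1), …, V^(k) and
every hypercube point V, some linear combination U = ∑ β_i V^(i) with all |β_i| ≤ γ₁ satisfies
‖V − U‖₂ ≤ γ₂ · dist(V, span{V^(1), …, V^(k)}). -/
theorem stmt14 (h : ℕ) (hh : 0 < h) :
    ∃ γ₁ γ₂ : ℝ, 0 < γ₁ ∧ 0 < γ₂ ∧
      ∀ n : ℕ, 0 < n → ∀ k : ℕ, 0 < k → k ≤ h →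
        ∀ V : Fin k → EuclideanSpace ℝ (Fin n), (∀ i, V i ∈ scaledCube n) →
          ∀ W : EuclideanSpace ℝ (Fin n), W ∈ scaledCube n →
            ∃ β : Fin k → ℝ, (∀ i, |β i| ≤ γ₁) ∧
              ‖W - ∑ i, β i • V i‖ ≤
                γ₂ * infDist W (Submodule.span ℝ (Set.range V) : Set (EuclideanSpace ℝ (Fin n))) := by
  classical
  refine ⟨h * (Cb h * (1 + Cb h)^h), 1, ?_, one_pos, ?_⟩
  · have h1 := Cb_pos h
    have h2 : (0:ℝ) < (1 + Cb h)^h := by positivity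
    have h3 : (0:ℝ) < h := by exact_mod_cast hh
    positivity
  intro n hn k hk hkh V hV W hW
  set Y : ℕ → EuclideanSpace ℝ (Fin n) := fun m => if hm : m < k then V ⟨m, hm⟩ else 0 with hY
  have hYc : ∀ m, m < k → Y m ∈ scaledCube n := by
    intro m hm
    rw [hY]
    simp only [dif_pos hm]
    exact hV _
  have hYV : ∀ i : Fin k, Y (i : ℕ) = V i := by
    intro i
    rw [hY]
    simp only [i.isLt, dif_pos]
  set thW : ℕ → ℝ := fun l => ⟪W, zv Y l⟫ / ‖zv Y l‖^2 with hthW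
  set U : EuclideanSpace ℝ (Fin n) := ∑ l ∈ Finset.range k, thW l • zv Y l with hU
  -- the candidate coefficients
  refine ⟨fun i => ∑ l ∈ Finset.range k, thW l * cm Y l (i : ℕ), ?_, ?_⟩
  · -- coefficient bound
    intro i
    have hterm : ∀ l ∈ Finset.range k, |thW l * cm Y l (i : ℕ)| ≤ Cb h * (1 + Cb h)^h := by
      intro l hl
      have hlk := Finset.mem_range.mp hl
      rw [abs_mul]
      have h1 : |thW l| ≤ Cb h := coeff_bound hn hkh Y hYc W hW l hlk
      have h2 : |cm Y l (i : ℕ)| ≤ (1 + Cb h)^l := cm_bound hn hkh Y hYc l hlk (i : ℕ)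
      have h3 : ((1 + Cb h):ℝ)^l ≤ (1 + Cb h)^h := by
        apply pow_le_pow_right₀ (by have := Cb_pos h; linarith) (by omega)
      exact mul_le_mul h1 (le_trans h2 h3) (abs_nonneg _) (le_trans (abs_nonneg _) h1)
    calc |∑ l ∈ Finset.range k, thW l * cm Y l (i : ℕ)|
        ≤ ∑ l ∈ Finset.range k, |thW l * cm Y l (i : ℕ)| := Finset.abs_sum_le_sum_abs _ _
      _ ≤ ∑ _l ∈ Finset.range k, Cb h * (1 + Cb h)^h := Finset.sum_le_sum hterm
      _ = k * (Cb h * (1 + Cb h)^h) := by rw [Finset.sum_const, Finset.card_range]; ring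
      _ ≤ h * (Cb h * (1 + Cb h)^h) := by
          have hpos : (0:ℝ) ≤ Cb h * (1 + Cb h)^h := by
            have := Cb_pos h; positivity
          have : (k:ℝ) ≤ (h:ℝ) := by exact_mod_cast hkh
          nlinarith
  · -- approximation bound
    have hUeq : ∑ i : Fin k, (∑ l ∈ Finset.range k, thW l * cm Y l (i : ℕ)) • V i = U := by
      rw [hU]
      have hswap : ∑ i : Fin k, (∑ l ∈ Finset.range k, thW l * cm Y l (i : ℕ)) • V i
          = ∑ l ∈ Finset.range k, ∑ i : Fin k, (thW l * cm Y l (i : ℕ)) • V i := by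
        rw [Finset.sum_comm]
        exact Finset.sum_congr rfl fun i _ => by rw [Finset.sum_smul]
      rw [hswap]
      refine Finset.sum_congr rfl fun l hl => ?_
      have hlk := Finset.mem_range.mp hl
      have hzv : zv Y l = ∑ i : Fin k, cm Y l (i : ℕ) • Y (i : ℕ) := by
        rw [zv, Fin.sum_univ_eq_sum_range (fun i => cm Y l i • Y i)]
        apply Finset.sum_subset
        · intro m hm
          rw [Finset.mem_range] at *
          omega
        · intro m _ hm
          rw [Finset.mem_range, not_lt] at hm
          rw [cm_gt Y l m (by omega), zero_smul]
      rw [hzv, Finset.smul_sum]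
      refine Finset.sum_congr rfl fun i _ => ?_
      rw [smul_smul, hYV]
    rw [hUeq, one_mul]
    -- orthogonality of the residual
    have hRz : ∀ l, l < k → ⟪W - U, zv Y l⟫ = 0 := by
      intro l hlk
      rw [inner_sub_left, hU, sum_inner]
      have hsum : ∑ l' ∈ Finset.range k, ⟪thW l' • zv Y l', zv Y l⟫ = ⟪W, zv Y l⟫ := by
        rw [Finset.sum_eq_single l]
        · rw [real_inner_smul_left, real_inner_self_eq_norm_sq]
          by_cases hz : zv Y l = 0
          · rw [hthW]
            simp [hz]
          · rw [hthW]
            simp only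
            rw [div_mul_cancel₀]
            exact pow_ne_zero 2 (norm_ne_zero_iff.mpr hz)
        · intro l' hl' hne
          rw [real_inner_smul_left]
          rcases lt_or_gt_of_ne hne with hc | hc
          · rw [real_inner_comm, zv_orth Y l l' hc, mul_zero]
          · rw [zv_orth Y l' l hc, mul_zero]
        · intro habs
          exact absurd (Finset.mem_range.mpr hlk) habs
      rw [hsum, sub_self]
    have hRV : ∀ i : Fin k, ⟪W - U, V i⟫ = 0 := by
      intro i
      rw [← hYV i]
      have hYe : Y (i : ℕ) = zv Y (i : ℕ) + ∑ l' ∈ Finset.range (i : ℕ), th Y (i : ℕ) l' • zv Y l' := by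
        rw [zv_eq]
        abel
      rw [hYe, inner_add_right, hRz (i : ℕ) i.isLt, inner_sum, zero_add]
      refine Finset.sum_eq_zero fun l' hl' => ?_
      rw [real_inner_smul_right, hRz l' (lt_trans (Finset.mem_range.mp hl') i.isLt), mul_zero]
    have hzv_mem : ∀ l, l < k → zv Y l ∈ Submodule.span ℝ (Set.range V) := by
      intro l hlk
      rw [zv]
      apply Submodule.sum_mem
      intro i hi
      have hik : i < k := by
        rw [Finset.mem_range] at hi
        omega
      apply Submodule.smul_mem
      apply Submodule.subset_span
      exact ⟨⟨i, hik⟩, by rw [← hYV ⟨i, hik⟩]⟩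
    have hUmem : U ∈ Submodule.span ℝ (Set.range V) := by
      rw [hU]
      exact Submodule.sum_mem _ fun l hl =>
        Submodule.smul_mem _ _ (hzv_mem l (Finset.mem_range.mp hl))
    have hRspan : ∀ y, y ∈ Submodule.span ℝ (Set.range V) → ⟪W - U, y⟫ = 0 := by
      intro y hy
      induction hy using Submodule.span_induction with
      | mem y hy =>
        obtain ⟨i, rfl⟩ := hy
        exact hRV i
      | zero => exact inner_zero_right _
      | add y z _ _ hy hz => rw [inner_add_right, hy, hz, add_zero]
      | smul a y _ hy => rw [real_inner_smul_right, hy, mul_zero]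
    -- conclude via infDist
    have hne : (Submodule.span ℝ (Set.range V) : Set (EuclideanSpace ℝ (Fin n))).Nonempty :=
      ⟨0, Submodule.zero_mem _⟩
    have hle : ∀ y ∈ (Submodule.span ℝ (Set.range V) : Set (EuclideanSpace ℝ (Fin n))),
        ‖W - U‖ ≤ dist W y := by
      intro y hy
      rw [dist_eq_norm]
      have hdecomp : W - y = (W - U) + (U - y) := by abel
      have hUy : (U - y) ∈ Submodule.span ℝ (Set.range V) :=
        Submodule.sub_mem _ hUmem hy
      have horth2 : ⟪W - U, U - y⟫ = 0 := hRspan _ hUy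
      have hsq : ‖W - y‖^2 = ‖W - U‖^2 + ‖U - y‖^2 := by
        rw [hdecomp, norm_add_sq_real, horth2]
        ring
      nlinarith [norm_nonneg (W - y), norm_nonneg (W - U), sq_nonneg (‖U - y‖)]
    by_contra hcon
    push_neg at hcon
    obtain ⟨y, hy, hd⟩ := (Metric.infDist_lt_iff hne).mp hcon
    exact absurd hd (not_lt.mpr (hle y hy))
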